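/- The map F : ℝ² → ℝ² defined by F(γ,δ) = ( 2cos(π(γ+1)/4) + 2cos(π(δ+3)/4), 2 + 4cos(π(γ+1)/4)·cos(π(δ+3)/4) ) is injective on the closed triangular region {(γ,δ) ∈ ℝ² : γ ≥ −1, δ ≤ 1, γ − δ ≤ 2}. -/

import Mathlib

/-- Theorem B(i) injectivity: the map from asymptotic data `(γ, δ)` to Stokes data
`(s₁ᴿ, −s₂ᴿ)` in the `n = 4` cases is injective on the region
`γ ≥ −1`, `δ ≤ 1`, `γ − δ ≤ 2`. -/
theorem stokes_injective_n4 :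
    Set.InjOn
      (fun p : ℝ × ℝ =>
        ((2 * Real.cos (Real.pi * (p.1 + 1) / 4) + 2 * Real.cos (Real.pi * (p.2 + 3) / 4),
          2 + 4 * Real.cos (Real.pi * (p.1 + 1) / 4) * Real.cos (Real.pi * (p.2 + 3) / 4)) :
          ℝ × ℝ))
      {p : ℝ × ℝ | -1 ≤ p.1 ∧ p.2 ≤ 1 ∧ p.1 - p.2 ≤ 2} := by
  have hπ := Real.pi_pos
  rintro ⟨γ₁, δ₁⟩ ⟨h1a, h1b, h1c⟩ ⟨γ₂, δ₂⟩ ⟨h2a, h2b, h2c⟩ h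
  simp only [Prod.mk.injEq, Set.mem_setOf_eq] at *
  obtain ⟨hs, hp⟩ := h
  set u₁ := Real.pi * (γ₁ + 1) / 4 with hu₁def
  set v₁ := Real.pi * (δ₁ + 3) / 4 with hv₁def
  set u₂ := Real.pi * (γ₂ + 1) / 4 with hu₂def
  set v₂ := Real.pi * (δ₂ + 3) / 4 with hv₂def
  have hu₁m : u₁ ∈ Set.Icc (0:ℝ) Real.pi :=
    ⟨by rw [hu₁def]; nlinarith, by rw [hu₁def]; nlinarith⟩
  have hv₁m : v₁ ∈ Set.Icc (0:ℝ) Real.pi :=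
    ⟨by rw [hv₁def]; nlinarith, by rw [hv₁def]; nlinarith⟩
  have hu₂m : u₂ ∈ Set.Icc (0:ℝ) Real.pi :=
    ⟨by rw [hu₂def]; nlinarith, by rw [hu₂def]; nlinarith⟩
  have hv₂m : v₂ ∈ Set.Icc (0:ℝ) Real.pi :=
    ⟨by rw [hv₂def]; nlinarith, by rw [hv₂def]; nlinarith⟩
  have huv₁ : u₁ ≤ v₁ := by rw [hu₁def, hv₁def]; nlinarith
  have huv₂ : u₂ ≤ v₂ := by rw [hu₂def, hv₂def]; nlinarith
  -- cosines
  set x₁ := Real.cos u₁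
  set y₁ := Real.cos v₁
  set x₂ := Real.cos u₂
  set y₂ := Real.cos v₂
  have hxy₁ : y₁ ≤ x₁ := Real.cos_le_cos_of_nonneg_of_le_pi hu₁m.1 hv₁m.2 huv₁
  have hxy₂ : y₂ ≤ x₂ := Real.cos_le_cos_of_nonneg_of_le_pi hu₂m.1 hv₂m.2 huv₂
  have hsum : x₁ + y₁ = x₂ + y₂ := by linarith
  have hprod : x₁ * y₁ = x₂ * y₂ := by linarith
  have hx : x₁ = x₂ ∧ y₁ = y₂ := by
    have hz : (x₁ - x₂) * (y₁ - x₂) = 0 := by linear_combination hprod - x₂ * hsum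
    rcases mul_eq_zero.mp hz with h0 | h0
    · constructor <;> linarith
    · -- y₁ = x₂, then x₁ = y₂, forcing all equal
      have hx₁ : x₁ = y₂ := by linarith
      constructor <;> linarith
  have hinj := Real.injOn_cos
  have hu : u₁ = u₂ := hinj hu₁m hu₂m hx.1
  have hv : v₁ = v₂ := hinj hv₁m hv₂m hx.2
  have hγ : γ₁ = γ₂ := by
    rw [hu₁def, hu₂def] at hu
    have := Real.pi_ne_zero
    field_simp at hu
    linarith
  have hδ : δ₁ = δ₂ := by
    rw [hv₁def, hv₂def] at hv
    have := Real.pi_ne_zero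
    field_simp at hv
    linarith
  simp [hγ, hδ]
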